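/- Consider an isotropic n-step random walk on S^{p-1} with deterministic initial direction x₀ = μ, where each conditional step pdf f(x_k | x_{k−1}) = g_{k,k−1}(x_{k−1}ᵀx_k) is absolutely continuous and unimodal with mode equal to the previous direction, i.e. each g_{k,k−1} is continuous and strictly increasing on [−1,1]. Then for all n ≥ 1, the pdf of x_n, written f(x_n; μ) = G_n(μᵀx_n), is unimodal with mode the initial direction μ: G_n is strictly increasing on [−1,1]. -/

import Mathlib

open MeasureTheory Set
open scoped RealInnerProductSpace
open scoped Pointwise

noncomputable section

/-- The unit sphere `S^{p-1} = {x ∈ ℝ^p : ‖x‖ = 1}` in `ℝ^p`. -/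
abbrev Sph (p : ℕ) : Type := Metric.sphere (0 : EuclideanSpace ℝ (Fin p)) 1

/-- The `(p-1)`-dimensional surface measure on the unit sphere `S^{p-1}`. -/
def sphMeasure (p : ℕ) : Measure (Sph p) :=
  (volume : Measure (EuclideanSpace ℝ (Fin p))).toSphere

/-- The cosine `xᵀy` of the angle between two points of the sphere. -/
def cosAngle {p : ℕ} (x y : Sph p) : ℝ :=
  ⟪(x : EuclideanSpace ℝ (Fin p)), (y : EuclideanSpace ℝ (Fin p))⟫

/-- The spherical convolution `(f ⋆_μ g)(x) = ∫_{S^{p-1}} F(xᵀy) G(yᵀμ) dy` of two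
rotationally symmetric functions `f(x) = F(μᵀx)`, `g(x) = G(μᵀx)` about the axis `μ`. -/
def sphConv {p : ℕ} (F G : ℝ → ℝ) (μ : Sph p) (x : Sph p) : ℝ :=
  ∫ y : Sph p, F (cosAngle x y) * G (cosAngle y μ) ∂(sphMeasure p)

/-- `F : [-1,1] → ℝ` is the profile of a rotationally symmetric probability density
function `x ↦ F(μᵀx)` on `S^{p-1}`: it is nonnegative and the corresponding rotationally
symmetric function is integrable with total integral `1` (about any axis). -/
def IsPdfProfile (p : ℕ) (F : ℝ → ℝ) : Prop :=
  (∀ t ∈ Icc (-1 : ℝ) 1, 0 ≤ F t) ∧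
  ∀ μ : Sph p, Integrable (fun x : Sph p => F (cosAngle μ x)) (sphMeasure p) ∧
    ∫ x : Sph p, F (cosAngle μ x) ∂(sphMeasure p) = 1

/-- The marginal probability density (w.r.t. the surface measure) of the `n`-th position
`x_n` of the isotropic random walk on `S^{p-1}` started at the deterministic direction
`x₀ = μ`, whose `k`-th step has conditional pdf `f(x_k | x_{k-1}) = g k (x_{k-1}ᵀ x_k)`,
the steps being generated independently (Chapman–Kolmogorov recursion). -/
def walkPdf {p : ℕ} (μ : Sph p) (g : ℕ → ℝ → ℝ) : ℕ → Sph p → ℝ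
  | 0 => fun _ => 0
  | 1 => fun x => g 1 (cosAngle μ x)
  | (n + 2) => fun x =>
      ∫ y : Sph p, g (n + 2) (cosAngle y x) * walkPdf μ g (n + 1) y ∂(sphMeasure p)



variable {p : ℕ}
local notation "E" => EuclideanSpace ℝ (Fin p)

instance : IsFiniteMeasure (sphMeasure p) := by unfold sphMeasure; infer_instance

/-- The measurable equiv of the sphere induced by a linear isometry equiv. -/
lemma sph_mem (e : E ≃ₗᵢ[ℝ] E) (x : Sph p) :
    e (x : E) ∈ Metric.sphere (0 : E) 1 := by
  rw [mem_sphere_zero_iff_norm, e.norm_map]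
  exact norm_eq_of_mem_sphere x

def sphEquiv (e : E ≃ₗᵢ[ℝ] E) : Sph p ≃ᵐ Sph p where
  toFun := fun x => ⟨e (x : E), sph_mem e x⟩
  invFun := fun x => ⟨e.symm (x : E), sph_mem e.symm x⟩
  left_inv := fun x => by ext; simp
  right_inv := fun x => by ext; simp
  measurable_toFun := Measurable.subtype_mk <| (e.continuous.comp continuous_subtype_val).measurable
  measurable_invFun := Measurable.subtype_mk <|
    (e.symm.continuous.comp continuous_subtype_val).measurable

@[simp] lemma sphEquiv_coe (e : E ≃ₗᵢ[ℝ] E) (x : Sph p) :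
    ((sphEquiv e x : Sph p) : E) = e x := rfl

lemma sphMap_measurePreserving (e : E ≃ₗᵢ[ℝ] E) :
    MeasurePreserving (sphEquiv e) (sphMeasure p) (sphMeasure p) := by
  refine ⟨(sphEquiv e).measurable, ?_⟩
  refine Measure.ext fun s hs => ?_
  rw [MeasurableEquiv.map_apply]
  have hs' : MeasurableSet ((sphEquiv e) ⁻¹' s) := (sphEquiv e).measurable hs
  show Measure.toSphere _ _ = Measure.toSphere _ _
  rw [Measure.toSphere_apply' _ hs', Measure.toSphere_apply' _ hs]
  congr 1
  have himg : (Subtype.val '' ((sphEquiv e) ⁻¹' s) : Set E) = e.symm '' (Subtype.val '' s) := by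
    ext w
    constructor
    · rintro ⟨x, hx, rfl⟩
      exact ⟨e x, ⟨sphEquiv e x, hx, rfl⟩, by simp⟩
    · rintro ⟨u, ⟨z, hz, rfl⟩, rfl⟩
      refine ⟨(sphEquiv e).symm z, ?_, rfl⟩
      simp only [Set.mem_preimage]
      convert hz
      ext; simp [sphEquiv]
  rw [himg]
  have hsmul : Ioo (0:ℝ) 1 • (e.symm '' (Subtype.val '' s)) =
      e.symm '' (Ioo (0:ℝ) 1 • (Subtype.val '' s)) := by
    ext w
    simp only [Set.mem_smul_set, Set.mem_image]
    constructor
    · rintro ⟨r, hr, _, ⟨u, hu, rfl⟩, rfl⟩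
      exact ⟨r • u, ⟨r, hr, u, hu, rfl⟩, by simp⟩
    · rintro ⟨_, ⟨r, hr, u, hu, rfl⟩, rfl⟩
      exact ⟨r, hr, e.symm u, ⟨u, hu, rfl⟩, by simp⟩
  rw [hsmul]
  have : e.symm '' (Ioo (0:ℝ) 1 • (Subtype.val '' s)) =
      ⇑e ⁻¹' (Ioo (0:ℝ) 1 • (Subtype.val '' s)) := by
    ext w; simp [Set.mem_image, Set.mem_preimage]
    constructor
    · rintro ⟨u, hu, rfl⟩; simpa using hu
    · intro h; exact ⟨e w, h, by simp⟩
  rw [this]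
  have hmp : MeasurePreserving (e.toHomeomorph.toMeasurableEquiv)
      (volume : Measure E) volume := e.measurePreserving
  calc volume (⇑e ⁻¹' (Ioo (0:ℝ) 1 • (Subtype.val '' s)))
      = Measure.map (e.toHomeomorph.toMeasurableEquiv) volume
          (Ioo (0:ℝ) 1 • (Subtype.val '' s)) := by
        rw [MeasurableEquiv.map_apply]; rfl
    _ = volume (Ioo (0:ℝ) 1 • (Subtype.val '' s)) := by rw [hmp.map_eq]

lemma integral_sphMap (e : E ≃ₗᵢ[ℝ] E) (f : Sph p → ℝ) :
    ∫ y, f (sphEquiv e y) ∂(sphMeasure p) = ∫ y, f y ∂(sphMeasure p) :=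
  (sphMap_measurePreserving e).integral_comp' f

lemma refl_apply (v w : E) :
    Submodule.reflection ((ℝ ∙ v)ᗮ) w = w - ((2 * ⟪v, w⟫) / ‖v‖ ^ 2) • v := by
  rw [Submodule.reflection_orthogonal_apply, Submodule.reflection_singleton_apply]
  simp only [RCLike.ofReal_real_eq_id, id_eq]
  have h2 : (2 : ℕ) • ((⟪v, w⟫ / ‖v‖ ^ 2) • v) = ((2 * ⟪v, w⟫) / ‖v‖ ^ 2) • v := by
    rw [two_smul, ← add_smul]; congr 1; ring
  rw [h2]; abel

lemma exists_flip (x x' : Sph p) :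
    ∃ e : E ≃ₗᵢ[ℝ] E,
      (∀ w : E, e w = w - ((2 * ⟪(x' : E) - (x : E), w⟫) / ‖(x' : E) - (x : E)‖ ^ 2) •
        ((x' : E) - (x : E))) ∧
      e (x : E) = (x' : E) ∧ e ((x' : E)) = (x : E) ∧ (∀ w, e (e w) = w) := by
  set v : E := (x' : E) - (x : E) with hv
  have h2 : Submodule.reflection ((ℝ ∙ v)ᗮ) (x : E) = (x' : E) := by
    rcases eq_or_ne (x : E) (x' : E) with h | h
    · have hv0 : v = 0 := by rw [hv, ← h, sub_self]
      rw [refl_apply, hv0]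
      simp [h]
    · have hx1 : ‖(x : E)‖ = 1 := norm_eq_of_mem_sphere x
      have hx'1 : ‖(x' : E)‖ = 1 := norm_eq_of_mem_sphere x'
      have hnv : ‖v‖ ^ 2 = 2 - 2 * ⟪(x' : E), (x : E)⟫ := by
        rw [hv, norm_sub_sq_real, hx1, hx'1]; ring
      have hvx : ⟪v, (x : E)⟫ = ⟪(x' : E), (x : E)⟫ - 1 := by
        rw [hv, inner_sub_left, real_inner_self_eq_norm_sq, hx1]; ring_nf
      have hne : ‖v‖ ^ 2 ≠ 0 :=
        pow_ne_zero _ (norm_ne_zero_iff.2 (sub_ne_zero.2 (Ne.symm h)))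
      have hden : (2 : ℝ) - 2 * ⟪(x' : E), (x : E)⟫ ≠ 0 := by rw [← hnv]; exact hne
      have hcoef : (2 * ⟪v, (x : E)⟫) / ‖v‖ ^ 2 = -1 := by
        rw [hvx, hnv, div_eq_iff hden]; ring
      rw [refl_apply, hcoef, neg_one_smul, sub_neg_eq_add, hv]
      abel
  exact ⟨Submodule.reflection ((ℝ ∙ v)ᗮ), fun w => refl_apply v w, h2,
    by rw [← h2, Submodule.reflection_reflection], fun w => Submodule.reflection_reflection _ w⟩

lemma exists_ortho (hp : 2 ≤ p) (μ : Sph p) : ∃ ν : Sph p, ⟪(μ : E), (ν : E)⟫ = 0 := by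
  have hμ : (μ : E) ≠ 0 := ne_zero_of_mem_unit_sphere μ
  have hrank : Module.finrank ℝ (ℝ ∙ (μ : E)) + Module.finrank ℝ ((ℝ ∙ (μ : E))ᗮ) =
      Module.finrank ℝ E := Submodule.finrank_add_finrank_orthogonal _
  rw [finrank_span_singleton hμ, finrank_euclideanSpace_fin] at hrank
  have hpos : 0 < Module.finrank ℝ ((ℝ ∙ (μ : E))ᗮ) := by omega
  have : Nontrivial ((ℝ ∙ (μ : E))ᗮ) := Module.finrank_pos_iff.mp hpos
  obtain ⟨⟨w, hwmem⟩, hw0⟩ := exists_ne (0 : ((ℝ ∙ (μ : E))ᗮ))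
  have hw : w ≠ 0 := by simpa [Submodule.mk_eq_zero] using hw0
  refine ⟨⟨‖w‖⁻¹ • w, ?_⟩, ?_⟩
  · rw [mem_sphere_zero_iff_norm, norm_smul, norm_inv, norm_norm,
      inv_mul_cancel₀ (norm_ne_zero_iff.2 hw)]
  · have h0 : ⟪(μ : E), w⟫ = 0 := Submodule.mem_orthogonal_singleton_iff_inner_right.mp hwmem
    show ⟪(μ : E), ‖w‖⁻¹ • w⟫ = 0
    rw [real_inner_smul_right, h0, mul_zero]

lemma cos_mem_Icc (x y : Sph p) : cosAngle x y ∈ Icc (-1 : ℝ) 1 := by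
  have h := abs_real_inner_le_norm (x : E) (y : E)
  rw [norm_eq_of_mem_sphere x, norm_eq_of_mem_sphere y, one_mul] at h
  exact abs_le.mp h

lemma cos_comm (x y : Sph p) : cosAngle x y = cosAngle y x := real_inner_comm _ _

lemma cos_sphEquiv (e : E ≃ₗᵢ[ℝ] E) (x y : Sph p) :
    cosAngle (sphEquiv e x) (sphEquiv e y) = cosAngle x y := e.inner_map_map _ _

lemma walk_two (g : ℕ → ℝ → ℝ) (μ : Sph p) (n : ℕ) (x : Sph p) :
    walkPdf μ g (n + 2) x =
      ∫ y : Sph p, g (n + 2) (cosAngle y x) * walkPdf μ g (n + 1) y ∂(sphMeasure p) := rfl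

lemma walk_symm (μ : Sph p) (g : ℕ → ℝ → ℝ) (e : E ≃ₗᵢ[ℝ] E) (he : e (μ : E) = (μ : E))
    (n : ℕ) : ∀ x : Sph p, walkPdf μ g n (sphEquiv e x) = walkPdf μ g n x := by
  have hμe : sphEquiv e μ = μ := Subtype.ext he
  induction n using Nat.strong_induction_on with
  | _ n ih =>
    match n with
    | 0 => intro x; rfl
    | 1 =>
      intro x
      show g 1 (cosAngle μ (sphEquiv e x)) = g 1 (cosAngle μ x)
      rw [show cosAngle μ (sphEquiv e x) = cosAngle (sphEquiv e μ) (sphEquiv e x) from by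
        rw [hμe], cos_sphEquiv]
    | (n + 2) =>
      intro x
      rw [walk_two, walk_two]
      rw [← integral_sphMap e
        (fun y => g (n + 2) (cosAngle y (sphEquiv e x)) * walkPdf μ g (n + 1) y)]
      congr 1
      funext y
      rw [cos_sphEquiv, ih (n + 1) (by omega) y]

lemma walk_rep (μ : Sph p) (g : ℕ → ℝ → ℝ) (n : ℕ) (x x' : Sph p)
    (h : cosAngle μ x = cosAngle μ x') : walkPdf μ g n x = walkPdf μ g n x' := by
  obtain ⟨e, hf, hx, hx', _⟩ := exists_flip x x'
  have he : e (μ : E) = (μ : E) := by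
    rw [hf]
    have : ⟪(x' : E) - (x : E), (μ : E)⟫ = 0 := by
      rw [inner_sub_left, real_inner_comm ((μ : E)) ((x' : E)),
        real_inner_comm ((μ : E)) ((x : E))]
      show cosAngle μ x' - cosAngle μ x = 0
      rw [h]; ring
    rw [this]
    simp
  have : sphEquiv e x = x' := Subtype.ext hx
  rw [← walk_symm μ g e he n x, this]

/-- clamp to [-1,1] -/
def cl (t : ℝ) : ℝ := max (-1) (min 1 t)

lemma cl_mem (t : ℝ) : cl t ∈ Icc (-1 : ℝ) 1 := by
  constructor
  · exact le_max_left _ _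
  · exact max_le (by norm_num) (min_le_left _ _)

lemma cl_eq {t : ℝ} (ht : t ∈ Icc (-1 : ℝ) 1) : cl t = t := by
  have := ht.1; have := ht.2
  rw [cl, min_eq_right ht.2, max_eq_right ht.1]

lemma cl_mono : Monotone cl := fun a b hab =>
  max_le_max le_rfl (min_le_min le_rfl hab)

lemma cl_idem (t : ℝ) : cl (cl t) = cl t := cl_eq (cl_mem t)

/-- a point on the sphere at prescribed "latitude" `cl t` relative to `μ`. -/
def pt (μ ν : Sph p) (hον : ⟪(μ : E), (ν : E)⟫ = 0) (t : ℝ) : Sph p :=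
  ⟨cl t • (μ : E) + Real.sqrt (1 - cl t ^ 2) • (ν : E), by
    have h1 : (-1 : ℝ) ≤ cl t := (cl_mem t).1
    have h2 : cl t ≤ 1 := (cl_mem t).2
    have hsq : 0 ≤ 1 - cl t ^ 2 := by nlinarith
    rw [mem_sphere_zero_iff_norm]
    have hnorm : ‖cl t • (μ : E) + Real.sqrt (1 - cl t ^ 2) • (ν : E)‖ ^ 2 = 1 := by
      rw [norm_add_sq_real, real_inner_smul_left, real_inner_smul_right, hον,
        norm_smul, norm_smul, norm_eq_of_mem_sphere μ, norm_eq_of_mem_sphere ν]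
      simp only [mul_zero, mul_one]
      rw [Real.norm_eq_abs, Real.norm_eq_abs, sq_abs, sq_abs, Real.sq_sqrt hsq]
      ring
    rw [← Real.sqrt_sq (norm_nonneg (cl t • (μ : E) + Real.sqrt (1 - cl t ^ 2) • (ν : E))),
      hnorm, Real.sqrt_one]⟩

lemma cos_pt (μ ν : Sph p) (hον : ⟪(μ : E), (ν : E)⟫ = 0) (t : ℝ) :
    cosAngle μ (pt μ ν hον t) = cl t := by
  show ⟪(μ : E), cl t • (μ : E) + Real.sqrt (1 - cl t ^ 2) • (ν : E)⟫ = cl t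
  rw [inner_add_right, real_inner_smul_right, real_inner_smul_right, hον,
    real_inner_self_eq_norm_sq, norm_eq_of_mem_sphere μ]
  ring

lemma measure_inner_ne_pos (hp : 2 ≤ p) (v : E) (hv : v ≠ 0) :
    0 < sphMeasure p {y : Sph p | ⟪v, (y : E)⟫ ≠ 0} := by
  have hcont : Continuous fun y : Sph p => ⟪v, (y : E)⟫ :=
    Continuous.inner continuous_const continuous_subtype_val
  have hUopen : IsOpen {y : Sph p | ⟪v, (y : E)⟫ ≠ 0} :=
    isOpen_compl_singleton.preimage hcont
  show 0 < Measure.toSphere _ _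
  rw [Measure.toSphere_apply' _ hUopen.measurableSet]
  have hdim : Module.finrank ℝ E = p := finrank_euclideanSpace_fin
  set W : Set E := Metric.ball (0 : E) 1 ∩ {w : E | ⟪v, w⟫ ≠ 0} with hW
  have hWopen : IsOpen W :=
    Metric.isOpen_ball.inter (isOpen_compl_singleton.preimage
      (Continuous.inner continuous_const continuous_id))
  have hWne : W.Nonempty := by
    have h1 : (0:ℝ) < ‖v‖ := norm_pos_iff.2 hv
    have h2 : (0:ℝ) < 2 * ‖v‖ := by linarith
    refine ⟨(2 * ‖v‖)⁻¹ • v, ?_, ?_⟩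
    · rw [Metric.mem_ball, dist_zero_right, norm_smul, Real.norm_eq_abs, abs_inv,
        abs_of_pos h2]
      rw [inv_mul_eq_div, div_lt_one h2]
      linarith
    · show ⟪v, (2 * ‖v‖)⁻¹ • v⟫ ≠ 0
      rw [real_inner_smul_right, real_inner_self_eq_norm_sq]
      have h1 : (0:ℝ) < ‖v‖ := norm_pos_iff.2 hv
      have : (0:ℝ) < (2 * ‖v‖)⁻¹ * ‖v‖ ^ 2 := by positivity
      exact this.ne'
  have hsub : W ⊆ Ioo (0:ℝ) 1 • (Subtype.val '' {y : Sph p | ⟪v, (y : E)⟫ ≠ 0}) := by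
    rintro w ⟨hw1, hw2⟩
    have hw0 : w ≠ 0 := by
      rintro rfl; exact hw2 (inner_zero_right v)
    have hwn : (0:ℝ) < ‖w‖ := norm_pos_iff.2 hw0
    have hu : ‖‖w‖⁻¹ • w‖ = 1 := by
      rw [norm_smul, Real.norm_eq_abs, abs_inv, abs_norm, inv_mul_cancel₀ hwn.ne']
    refine Set.mem_smul.2 ⟨‖w‖, ⟨hwn, by rwa [Metric.mem_ball, dist_zero_right] at hw1⟩,
      ‖w‖⁻¹ • w, ⟨⟨‖w‖⁻¹ • w, mem_sphere_zero_iff_norm.2 hu⟩, ?_, rfl⟩, ?_⟩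
    · show ⟪v, ‖w‖⁻¹ • w⟫ ≠ 0
      rw [real_inner_smul_right]
      exact mul_ne_zero (inv_ne_zero hwn.ne') hw2
    · rw [smul_smul, mul_inv_cancel₀ hwn.ne', one_smul]
  have hWpos : 0 < volume W := hWopen.measure_pos volume hWne
  have hle : volume W ≤ volume (Ioo (0:ℝ) 1 • (Subtype.val '' {y : Sph p | ⟪v, (y : E)⟫ ≠ 0})) :=
    measure_mono hsub
  refine ENNReal.mul_pos ?_ ?_
  · simp [hdim]; omega
  · exact (lt_of_lt_of_le hWpos hle).ne'

lemma integrable_conv (F G : ℝ → ℝ) (hFc : ContinuousOn F (Icc (-1) 1))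
    (hFm : MonotoneOn F (Icc (-1:ℝ) 1)) (hF0 : ∀ t ∈ Icc (-1:ℝ) 1, 0 ≤ F t)
    (hGm : Monotone G) (hG0 : ∀ t ∈ Icc (-1:ℝ) 1, 0 ≤ G t) (μ x : Sph p) :
    Integrable (fun y : Sph p => F (cosAngle y x) * G (cosAngle μ y)) (sphMeasure p) := by
  have hc1 : Continuous fun y : Sph p => cosAngle y x :=
    Continuous.inner continuous_subtype_val continuous_const
  have hc2 : Continuous fun y : Sph p => cosAngle μ y :=
    Continuous.inner continuous_const continuous_subtype_val
  have hmeas : Measurable fun y : Sph p => F (cosAngle y x) * G (cosAngle μ y) :=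
    ((hFc.comp_continuous hc1 fun y => cos_mem_Icc y x).measurable).mul
      (hGm.measurable.comp hc2.measurable)
  refine (integrable_const (F 1 * G 1)).mono' hmeas.aestronglyMeasurable
    (Filter.Eventually.of_forall fun y => ?_)
  have h1m : (1:ℝ) ∈ Icc (-1:ℝ) 1 := by constructor <;> norm_num
  have hFy := hF0 _ (cos_mem_Icc y x)
  have hGy := hG0 _ (cos_mem_Icc μ y)
  rw [Real.norm_eq_abs, abs_of_nonneg (mul_nonneg hFy hGy)]
  exact mul_le_mul (hFm (cos_mem_Icc y x) h1m (cos_mem_Icc y x).2)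
    (hGm.monotoneOn _ (cos_mem_Icc μ y) h1m (cos_mem_Icc μ y).2) hGy (hF0 _ h1m)

lemma step_mono (hp : 2 ≤ p) (μ : Sph p) (F G : ℝ → ℝ)
    (hFc : ContinuousOn F (Icc (-1) 1)) (hFm : StrictMonoOn F (Icc (-1) 1))
    (hF0 : ∀ t ∈ Icc (-1:ℝ) 1, 0 ≤ F t)
    (hGm : Monotone G) (hGs : StrictMonoOn G (Icc (-1) 1)) (hG0 : ∀ t ∈ Icc (-1:ℝ) 1, 0 ≤ G t)
    (x1 x2 : Sph p) (h12 : cosAngle μ x1 < cosAngle μ x2) :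
    ∫ y, F (cosAngle y x1) * G (cosAngle μ y) ∂(sphMeasure p) <
      ∫ y, F (cosAngle y x2) * G (cosAngle μ y) ∂(sphMeasure p) := by
  obtain ⟨e, hf, hx1, hx2, hinv⟩ := exists_flip x1 x2
  set v : E := (x2 : E) - (x1 : E) with hvdef
  have hvμ : ⟪(μ : E), v⟫ = cosAngle μ x2 - cosAngle μ x1 := by
    rw [hvdef, inner_sub_right]; rfl
  have hvne : v ≠ 0 := by
    intro h
    rw [h, inner_zero_right] at hvμ
    linarith
  have hnv : (0:ℝ) < ‖v‖ ^ 2 := pow_pos (norm_pos_iff.2 hvne) 2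
  have hc : (0:ℝ) < 2 * ⟪(μ : E), v⟫ / ‖v‖ ^ 2 := by
    apply div_pos _ hnv; linarith
  set φ1 : Sph p → ℝ := fun y => F (cosAngle y x1) * G (cosAngle μ y) with hφ1
  set φ2 : Sph p → ℝ := fun y => F (cosAngle y x2) * G (cosAngle μ y) with hφ2
  set ψ : Sph p → ℝ := fun y => φ2 y - φ1 y with hψ
  have hi1 : Integrable φ1 (sphMeasure p) :=
    integrable_conv F G hFc hFm.monotoneOn hF0 hGm hG0 μ x1
  have hi2 : Integrable φ2 (sphMeasure p) :=
    integrable_conv F G hFc hFm.monotoneOn hF0 hGm hG0 μ x2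
  have hiψ : Integrable ψ (sphMeasure p) := hi2.sub hi1
  have hiψe : Integrable (fun y => ψ (sphEquiv e y)) (sphMeasure p) :=
    ((sphMap_measurePreserving e).integrable_comp_emb
      (sphEquiv e).measurableEmbedding).2 hiψ
  set χ : Sph p → ℝ := fun y => ψ y + ψ (sphEquiv e y) with hχ
  have h1 : ∀ y : Sph p, cosAngle (sphEquiv e y) x2 = cosAngle y x1 := by
    intro y
    show ⟪e (y : E), (x2 : E)⟫ = ⟪(y : E), (x1 : E)⟫
    rw [← hx1]; exact e.inner_map_map _ _
  have h2 : ∀ y : Sph p, cosAngle (sphEquiv e y) x1 = cosAngle y x2 := by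
    intro y
    show ⟪e (y : E), (x1 : E)⟫ = ⟪(y : E), (x2 : E)⟫
    rw [← hx2]; exact e.inner_map_map _ _
  have key : ∀ y : Sph p, χ y =
      (F (cosAngle y x2) - F (cosAngle y x1)) *
        (G (cosAngle μ y) - G (cosAngle μ (sphEquiv e y))) := by
    intro y
    rw [hχ]
    show (φ2 y - φ1 y) + (φ2 (sphEquiv e y) - φ1 (sphEquiv e y)) = _
    rw [hφ1, hφ2]
    simp only [h1 y, h2 y]
    ring
  have hdiffa : ∀ y : Sph p, cosAngle y x2 - cosAngle y x1 = ⟪v, (y : E)⟫ := by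
    intro y
    rw [hvdef, inner_sub_left]
    show ⟪(y:E), (x2:E)⟫ - ⟪(y:E), (x1:E)⟫ = ⟪(x2:E), (y:E)⟫ - ⟪(x1:E), (y:E)⟫
    rw [real_inner_comm ((x2:E)) ((y:E)), real_inner_comm ((x1:E)) ((y:E))]
  have hdiffb : ∀ y : Sph p, cosAngle μ y - cosAngle μ (sphEquiv e y) =
      (2 * ⟪(μ : E), v⟫ / ‖v‖ ^ 2) * ⟪v, (y : E)⟫ := by
    intro y
    show ⟪(μ:E), (y:E)⟫ - ⟪(μ:E), e (y:E)⟫ = _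
    rw [hf ((y : E)), inner_sub_right, real_inner_smul_right]
    ring
  have hicc2 : ∀ y : Sph p, cosAngle μ (sphEquiv e y) ∈ Icc (-1:ℝ) 1 :=
    fun y => cos_mem_Icc μ (sphEquiv e y)
  have hχ0 : ∀ y : Sph p, 0 ≤ χ y := by
    intro y
    rw [key y]
    rcases lt_trichotomy (⟪v, (y : E)⟫ : ℝ) 0 with hs | hs | hs
    · apply le_of_lt
      apply mul_pos_of_neg_of_neg
      · rw [sub_neg]
        apply hFm (cos_mem_Icc y x2) (cos_mem_Icc y x1)
        have := hdiffa y; linarith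
      · rw [sub_neg]
        apply hGs (cos_mem_Icc μ y) (hicc2 y)
        have := hdiffb y
        nlinarith
    · have ha : cosAngle y x2 = cosAngle y x1 := by have := hdiffa y; linarith
      rw [ha, sub_self, zero_mul]
    · apply le_of_lt
      apply mul_pos
      · rw [sub_pos]
        apply hFm (cos_mem_Icc y x1) (cos_mem_Icc y x2)
        have := hdiffa y; linarith
      · rw [sub_pos]
        apply hGs (hicc2 y) (cos_mem_Icc μ y)
        have := hdiffb y
        nlinarith
  have hχpos : ∀ y : Sph p, ⟪v, (y : E)⟫ ≠ 0 → 0 < χ y := by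
    intro y hy
    rw [key y]
    rcases hy.lt_or_gt with hs | hs
    · apply mul_pos_of_neg_of_neg
      · rw [sub_neg]
        apply hFm (cos_mem_Icc y x2) (cos_mem_Icc y x1)
        have := hdiffa y; linarith
      · rw [sub_neg]
        apply hGs (cos_mem_Icc μ y) (hicc2 y)
        have := hdiffb y; nlinarith
    · apply mul_pos
      · rw [sub_pos]
        apply hFm (cos_mem_Icc y x1) (cos_mem_Icc y x2)
        have := hdiffa y; linarith
      · rw [sub_pos]
        apply hGs (hicc2 y) (cos_mem_Icc μ y)
        have := hdiffb y; nlinarith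
  have hiχ : Integrable χ (sphMeasure p) := hiψ.add hiψe
  have hsupp : {y : Sph p | ⟪v, (y : E)⟫ ≠ 0} ⊆ Function.support χ :=
    fun y hy => (hχpos y hy).ne'
  have hposχ : 0 < ∫ y, χ y ∂(sphMeasure p) := by
    rw [integral_pos_iff_support_of_nonneg hχ0 hiχ]
    exact lt_of_lt_of_le (measure_inner_ne_pos hp v hvne) (measure_mono hsupp)
  have hsplit : ∫ y, χ y ∂(sphMeasure p) =
      (∫ y, ψ y ∂(sphMeasure p)) + ∫ y, ψ (sphEquiv e y) ∂(sphMeasure p) :=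
    integral_add hiψ hiψe
  have hmap : ∫ y, ψ (sphEquiv e y) ∂(sphMeasure p) = ∫ y, ψ y ∂(sphMeasure p) :=
    integral_sphMap e ψ
  have hψpos : 0 < ∫ y, ψ y ∂(sphMeasure p) := by
    rw [hsplit, hmap] at hposχ; linarith
  have hsub : ∫ y, ψ y ∂(sphMeasure p) =
      (∫ y, φ2 y ∂(sphMeasure p)) - ∫ y, φ1 y ∂(sphMeasure p) := integral_sub hi2 hi1
  rw [hsub] at hψpos
  show (∫ y, φ1 y ∂(sphMeasure p)) < ∫ y, φ2 y ∂(sphMeasure p)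
  linarith

/-- unimodality of the isotropic random walk. If every step profile `g k` is
continuous, strictly increasing and nonnegative on `[-1,1]` (absolutely continuous
unimodal steps with mode the previous direction), then for every `n ≥ 1` the pdf of
`x_n`, written `G_n(μᵀ x_n)`, is unimodal with mode the initial direction `μ`: `G_n` is
strictly increasing on `[-1,1]`. -/
theorem stmt_8 {p : ℕ} (hp : 2 ≤ p) (μ : Sph p) (g : ℕ → ℝ → ℝ)
    (hg : ∀ k : ℕ, 1 ≤ k → IsPdfProfile p (g k))
    (hgc : ∀ k : ℕ, 1 ≤ k → ContinuousOn (g k) (Icc (-1 : ℝ) 1))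
    (hgm : ∀ k : ℕ, 1 ≤ k → StrictMonoOn (g k) (Icc (-1 : ℝ) 1))
    (n : ℕ) (hn : 1 ≤ n) :
    ∃ G : ℝ → ℝ, (∀ x : Sph p, walkPdf μ g n x = G (cosAngle μ x)) ∧
      StrictMonoOn G (Icc (-1 : ℝ) 1) := by
  obtain ⟨ν, hον⟩ := exists_ortho hp μ
  set Gd : ℕ → ℝ → ℝ := fun n t => walkPdf μ g n (pt μ ν hον t) with hGd
  have rep : ∀ (n : ℕ) (x : Sph p), walkPdf μ g n x = Gd n (cosAngle μ x) := by
    intro n x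
    apply walk_rep
    rw [cos_pt, cl_eq (cos_mem_Icc μ x)]
  have hptcl : ∀ t, pt μ ν hον (cl t) = pt μ ν hον t := by
    intro t
    apply Subtype.ext
    show cl (cl t) • (μ : EuclideanSpace ℝ (Fin p)) + Real.sqrt (1 - cl (cl t) ^ 2) • (ν : _) = _
    rw [cl_idem]
    rfl
  have wnonneg : ∀ (n : ℕ), ∀ x : Sph p, 0 ≤ walkPdf μ g n x := by
    intro n
    induction n using Nat.strong_induction_on with
    | _ n ih =>
      match n with
      | 0 => intro x; exact le_refl 0
      | 1 => intro x; exact (hg 1 le_rfl).1 _ (cos_mem_Icc μ x)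
      | (n + 2) =>
        intro x
        rw [walk_two]
        apply integral_nonneg
        intro y
        exact mul_nonneg ((hg (n+2) (by omega)).1 _ (cos_mem_Icc y x)) (ih (n+1) (by omega) y)
  have mono_of_strict : ∀ (n : ℕ), StrictMonoOn (Gd n) (Icc (-1:ℝ) 1) → Monotone (Gd n) := by
    intro n hs a b hab
    have ha : Gd n a = Gd n (cl a) := by rw [hGd]; show _ = walkPdf μ g n _; rw [hptcl]
    have hb : Gd n b = Gd n (cl b) := by rw [hGd]; show _ = walkPdf μ g n _; rw [hptcl]
    rw [ha, hb]
    rcases eq_or_lt_of_le (cl_mono hab) with h | h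
    · rw [h]
    · exact le_of_lt (hs (cl_mem a) (cl_mem b) h)
  have smono : ∀ m : ℕ, StrictMonoOn (Gd (m + 1)) (Icc (-1:ℝ) 1) := by
    intro m
    induction m with
    | zero =>
      intro t1 h1 t2 h2 hlt
      show g 1 (cosAngle μ (pt μ ν hον t1)) < g 1 (cosAngle μ (pt μ ν hον t2))
      rw [cos_pt, cos_pt, cl_eq h1, cl_eq h2]
      exact hgm 1 le_rfl h1 h2 hlt
    | succ m ihm =>
      intro t1 h1 t2 h2 hlt
      show walkPdf μ g (m + 2) (pt μ ν hον t1) < walkPdf μ g (m + 2) (pt μ ν hον t2)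
      rw [walk_two, walk_two]
      simp only [rep (m + 1)]
      apply step_mono hp μ (g (m + 2)) (Gd (m + 1)) (hgc (m + 2) (by omega))
        (hgm (m + 2) (by omega)) ((hg (m + 2) (by omega)).1)
        (mono_of_strict (m + 1) ihm) ihm
        (fun t _ => wnonneg (m + 1) (pt μ ν hον t))
      rw [cos_pt, cos_pt, cl_eq h1, cl_eq h2]
      exact hlt
  obtain ⟨m, rfl⟩ : ∃ m, n = m + 1 := ⟨n - 1, by omega⟩
  exact ⟨Gd (m + 1), rep (m + 1), smono m⟩
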